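/- Let H, D, X_d, Y_p, Y_d be finite sets and let p be a probability mass function on H × D × X_d × Y_p × Y_d. Then the conditional entropies computed from p satisfy H(H, D | (Y_p, Y_d)) ≤ H(H | Y_p) + H((D, X_d) | (Y_d, H)). -/

import Mathlib

private lemma log_pt (x q r a b c e : ℝ) (hx : 0 ≤ x)
    (h1 : x ≤ q) (h2 : x ≤ r) (h3 : x ≤ a) (h4 : x ≤ b) (h5 : x ≤ c) (h6 : x ≤ e) :
    x * Real.log (a / b) + x * Real.log (c / e) - x * Real.log (q / r) ≤
      x * (r / q) * (a / b) * (c / e) - x := by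
  rcases hx.eq_or_lt with h | hxpos
  · simp [← h]
  · have hq := hxpos.trans_le h1
    have hr := hxpos.trans_le h2
    have ha := hxpos.trans_le h3
    have hb := hxpos.trans_le h4
    have hc := hxpos.trans_le h5
    have he := hxpos.trans_le h6
    have ht : (0:ℝ) < (r / q) * (a / b) * (c / e) := by positivity
    have hlog := Real.log_le_sub_one_of_pos ht
    have hsplit : Real.log ((r / q) * (a / b) * (c / e))
        = Real.log (a / b) + Real.log (c / e) - Real.log (q / r) := by
      rw [Real.log_mul (by positivity) (by positivity),
          Real.log_mul (by positivity) (by positivity),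
          Real.log_div hr.ne' hq.ne', Real.log_div hq.ne' hr.ne']
      ring
    have h2' := mul_le_mul_of_nonneg_left hlog hx
    calc x * Real.log (a / b) + x * Real.log (c / e) - x * Real.log (q / r)
        = x * Real.log ((r / q) * (a / b) * (c / e)) := by rw [hsplit]; ring
      _ ≤ x * ((r / q) * (a / b) * (c / e) - 1) := h2'
      _ = x * (r / q) * (a / b) * (c / e) - x := by ring

private lemma mul_div_self_le' (q r : ℝ) (hq : 0 ≤ q) (hr : 0 ≤ r) : q * (r / q) ≤ r := by
  rcases hq.eq_or_lt with h | h
  · simpa [← h] using hr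
  · rw [mul_comm, div_mul_cancel₀ _ h.ne']

private lemma div_self_le_one' (e : ℝ) : e / e ≤ 1 := by
  rcases eq_or_ne e 0 with h | h
  · simp [h]
  · simp [div_self h]

private lemma div_le_div_nonneg_right' {a b : ℝ} (h : a ≤ b) (e : ℝ) (he : 0 ≤ e) :
    a / e ≤ b / e := by
  rw [div_eq_mul_inv, div_eq_mul_inv]
  exact mul_le_mul_of_nonneg_right h (inv_nonneg.2 he)

section Aux

variable {H D Xd Yp Yd : Type*} [Fintype H] [Fintype D] [Fintype Xd] [Fintype Yp] [Fintype Yd]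

private def Qm (p : H → D → Xd → Yp → Yd → ℝ) (h : H) (d : D) (yp : Yp) (yd : Yd) : ℝ :=
  ∑ xd, p h d xd yp yd

private def Rm (p : H → D → Xd → Yp → Yd → ℝ) (yp : Yp) (yd : Yd) : ℝ :=
  ∑ h, ∑ d, ∑ xd, p h d xd yp yd

private def Am (p : H → D → Xd → Yp → Yd → ℝ) (h : H) (yp : Yp) : ℝ :=
  ∑ d, ∑ xd, ∑ yd, p h d xd yp yd

private def Bm (p : H → D → Xd → Yp → Yd → ℝ) (yp : Yp) : ℝ :=
  ∑ h, ∑ d, ∑ xd, ∑ yd, p h d xd yp yd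

private def Cm (p : H → D → Xd → Yp → Yd → ℝ) (h : H) (d : D) (xd : Xd) (yd : Yd) : ℝ :=
  ∑ yp, p h d xd yp yd

private def Em (p : H → D → Xd → Yp → Yd → ℝ) (h : H) (yd : Yd) : ℝ :=
  ∑ d, ∑ xd, ∑ yp, p h d xd yp yd

private def Fm (p : H → D → Xd → Yp → Yd → ℝ) (h : H) (d : D) (yd : Yd) : ℝ :=
  ∑ xd, ∑ yp, p h d xd yp yd

private theorem cond_aux (p : H → D → Xd → Yp → Yd → ℝ)
    (hp : ∀ h d xd yp yd, 0 ≤ p h d xd yp yd)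
    (hs : ∑ h, ∑ d, ∑ xd, ∑ yp, ∑ yd, p h d xd yp yd = 1) :
    -(∑ h, ∑ d, ∑ yp, ∑ yd, Qm p h d yp yd * Real.log (Qm p h d yp yd / Rm p yp yd)) ≤
      -(∑ h, ∑ yp, Am p h yp * Real.log (Am p h yp / Bm p yp)) +
      -(∑ d, ∑ xd, ∑ yd, ∑ h, Cm p h d xd yd * Real.log (Cm p h d xd yd / Em p h yd)) := by
  -- nonnegativity of marginals
  have hQ0 : ∀ h d yp yd, 0 ≤ Qm p h d yp yd := fun _ _ _ _ =>
    Finset.sum_nonneg fun _ _ => hp _ _ _ _ _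
  have hR0 : ∀ yp yd, 0 ≤ Rm p yp yd := fun _ _ =>
    Finset.sum_nonneg fun _ _ => Finset.sum_nonneg fun _ _ =>
      Finset.sum_nonneg fun _ _ => hp _ _ _ _ _
  have hA0 : ∀ h yp, 0 ≤ Am p h yp := fun _ _ =>
    Finset.sum_nonneg fun _ _ => Finset.sum_nonneg fun _ _ =>
      Finset.sum_nonneg fun _ _ => hp _ _ _ _ _
  have hB0 : ∀ yp, 0 ≤ Bm p yp := fun _ =>
    Finset.sum_nonneg fun _ _ => Finset.sum_nonneg fun _ _ =>
      Finset.sum_nonneg fun _ _ => Finset.sum_nonneg fun _ _ => hp _ _ _ _ _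
  have hC0 : ∀ h d xd yd, 0 ≤ Cm p h d xd yd := fun _ _ _ _ =>
    Finset.sum_nonneg fun _ _ => hp _ _ _ _ _
  have hE0 : ∀ h yd, 0 ≤ Em p h yd := fun _ _ =>
    Finset.sum_nonneg fun _ _ => Finset.sum_nonneg fun _ _ =>
      Finset.sum_nonneg fun _ _ => hp _ _ _ _ _
  have hF0 : ∀ h d yd, 0 ≤ Fm p h d yd := fun _ _ _ =>
    Finset.sum_nonneg fun _ _ => Finset.sum_nonneg fun _ _ => hp _ _ _ _ _
  -- p is below each marginal
  have hpQ : ∀ h d xd yp yd, p h d xd yp yd ≤ Qm p h d yp yd := fun h d xd yp yd =>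
    Finset.single_le_sum (f := fun xd' => p h d xd' yp yd)
      (fun _ _ => hp _ _ _ _ _) (Finset.mem_univ xd)
  have hpR : ∀ h d xd yp yd, p h d xd yp yd ≤ Rm p yp yd := by
    intro h d xd yp yd
    refine (hpQ h d xd yp yd).trans ?_
    refine le_trans (Finset.single_le_sum (f := fun d' => Qm p h d' yp yd)
      (fun d' _ => hQ0 h d' yp yd) (Finset.mem_univ d)) ?_
    exact Finset.single_le_sum (f := fun h' => ∑ d', Qm p h' d' yp yd)
      (fun h' _ => Finset.sum_nonneg fun d' _ => hQ0 h' d' yp yd) (Finset.mem_univ h)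
  have hpA : ∀ h d xd yp yd, p h d xd yp yd ≤ Am p h yp := by
    intro h d xd yp yd
    refine le_trans (Finset.single_le_sum (f := fun yd' => p h d xd yp yd')
      (fun _ _ => hp _ _ _ _ _) (Finset.mem_univ yd)) ?_
    refine le_trans (Finset.single_le_sum (f := fun xd' => ∑ yd', p h d xd' yp yd')
      (fun _ _ => Finset.sum_nonneg fun _ _ => hp _ _ _ _ _) (Finset.mem_univ xd)) ?_
    exact Finset.single_le_sum (f := fun d' => ∑ xd', ∑ yd', p h d' xd' yp yd')
      (fun _ _ => Finset.sum_nonneg fun _ _ => Finset.sum_nonneg fun _ _ => hp _ _ _ _ _)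
      (Finset.mem_univ d)
  have hpB : ∀ h d xd yp yd, p h d xd yp yd ≤ Bm p yp := by
    intro h d xd yp yd
    refine (hpA h d xd yp yd).trans ?_
    exact Finset.single_le_sum (f := fun h' => Am p h' yp)
      (fun h' _ => hA0 h' yp) (Finset.mem_univ h)
  have hpC : ∀ h d xd yp yd, p h d xd yp yd ≤ Cm p h d xd yd := fun h d xd yp yd =>
    Finset.single_le_sum (f := fun yp' => p h d xd yp' yd)
      (fun _ _ => hp _ _ _ _ _) (Finset.mem_univ yp)
  have hCF : ∀ h d xd yd, Cm p h d xd yd ≤ Fm p h d yd := by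
    intro h d xd yd
    exact Finset.single_le_sum (f := fun xd' => Cm p h d xd' yd)
      (fun xd' _ => hC0 h d xd' yd) (Finset.mem_univ xd)
  have hpE : ∀ h d xd yp yd, p h d xd yp yd ≤ Em p h yd := by
    intro h d xd yp yd
    refine ((hpC h d xd yp yd).trans (hCF h d xd yd)).trans ?_
    exact Finset.single_le_sum (f := fun d' => Fm p h d' yd)
      (fun d' _ => hF0 h d' yd) (Finset.mem_univ d)
  -- sums of marginals
  have hRB : ∀ yp, (∑ yd, Rm p yp yd) = Bm p yp := by
    intro yp
    show (∑ yd, ∑ h, ∑ d, ∑ xd, p h d xd yp yd) = ∑ h, ∑ d, ∑ xd, ∑ yd, p h d xd yp yd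
    rw [Finset.sum_comm]
    conv_lhs => enter [2, h]; rw [Finset.sum_comm]
    conv_lhs => enter [2, h, 2, d]; rw [Finset.sum_comm]
  have hFE : ∀ h yd, (∑ d, Fm p h d yd) = Em p h yd := fun _ _ => rfl
  have hA1 : (∑ h, ∑ yp, Am p h yp) = 1 := by
    show (∑ h, ∑ yp, ∑ d, ∑ xd, ∑ yd, p h d xd yp yd) = 1
    conv_lhs => enter [2, h]; rw [Finset.sum_comm]
    conv_lhs => enter [2, h, 2, d]; rw [Finset.sum_comm]
    exact hs
  -- the Gibbs bound ∑ G ≤ 1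
  have hS : (∑ h, ∑ d, ∑ xd, ∑ yp, ∑ yd,
      p h d xd yp yd * (Rm p yp yd / Qm p h d yp yd) * (Am p h yp / Bm p yp) *
        (Cm p h d xd yd / Em p h yd)) ≤ 1 := by
    have reorder : (∑ h, ∑ d, ∑ xd, ∑ yp, ∑ yd,
        p h d xd yp yd * (Rm p yp yd / Qm p h d yp yd) * (Am p h yp / Bm p yp) *
          (Cm p h d xd yd / Em p h yd)) =
        ∑ h, ∑ yp, ∑ yd, ∑ d, ∑ xd,
        p h d xd yp yd * (Rm p yp yd / Qm p h d yp yd) * (Am p h yp / Bm p yp) *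
          (Cm p h d xd yd / Em p h yd) := by
      conv_rhs => enter [2, h, 2, yp]; rw [Finset.sum_comm]
      conv_rhs => enter [2, h, 2, yp, 2, d]; rw [Finset.sum_comm]
      conv_rhs => enter [2, h]; rw [Finset.sum_comm]
      conv_rhs => enter [2, h, 2, d]; rw [Finset.sum_comm]
    rw [reorder]
    have step_xd : ∀ h yp yd d,
        (∑ xd, p h d xd yp yd * (Rm p yp yd / Qm p h d yp yd) * (Am p h yp / Bm p yp) *
          (Cm p h d xd yd / Em p h yd)) ≤
        Rm p yp yd * ((Am p h yp / Bm p yp) * (Fm p h d yd / Em p h yd)) := by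
      intro h yp yd d
      calc (∑ xd, p h d xd yp yd * (Rm p yp yd / Qm p h d yp yd) * (Am p h yp / Bm p yp) *
              (Cm p h d xd yd / Em p h yd))
          ≤ ∑ xd, p h d xd yp yd * (Rm p yp yd / Qm p h d yp yd) * (Am p h yp / Bm p yp) *
              (Fm p h d yd / Em p h yd) := by
            refine Finset.sum_le_sum fun xd _ => ?_
            refine mul_le_mul_of_nonneg_left
              (div_le_div_nonneg_right' (hCF h d xd yd) _ (hE0 h yd)) ?_
            exact mul_nonneg (mul_nonneg (hp _ _ _ _ _)
              (div_nonneg (hR0 yp yd) (hQ0 h d yp yd)))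
              (div_nonneg (hA0 h yp) (hB0 yp))
        _ = (∑ xd, p h d xd yp yd) * ((Rm p yp yd / Qm p h d yp yd) *
              (Am p h yp / Bm p yp) * (Fm p h d yd / Em p h yd)) := by
            rw [Finset.sum_mul]
            exact Finset.sum_congr rfl fun xd _ => by ring
        _ = Qm p h d yp yd * ((Rm p yp yd / Qm p h d yp yd) *
              (Am p h yp / Bm p yp) * (Fm p h d yd / Em p h yd)) := rfl
        _ = (Qm p h d yp yd * (Rm p yp yd / Qm p h d yp yd)) *
              ((Am p h yp / Bm p yp) * (Fm p h d yd / Em p h yd)) := by ring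
        _ ≤ Rm p yp yd * ((Am p h yp / Bm p yp) * (Fm p h d yd / Em p h yd)) := by
            refine mul_le_mul_of_nonneg_right
              (mul_div_self_le' _ _ (hQ0 h d yp yd) (hR0 yp yd)) ?_
            exact mul_nonneg (div_nonneg (hA0 h yp) (hB0 yp))
              (div_nonneg (hF0 h d yd) (hE0 h yd))
    have step_d : ∀ h yp yd,
        (∑ d, Rm p yp yd * ((Am p h yp / Bm p yp) * (Fm p h d yd / Em p h yd))) ≤
        Rm p yp yd * (Am p h yp / Bm p yp) := by
      intro h yp yd
      calc (∑ d, Rm p yp yd * ((Am p h yp / Bm p yp) * (Fm p h d yd / Em p h yd)))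
          = ∑ d, (Rm p yp yd * (Am p h yp / Bm p yp)) * (Fm p h d yd / Em p h yd) := by
            exact Finset.sum_congr rfl fun d _ => by ring
        _ = (Rm p yp yd * (Am p h yp / Bm p yp)) * ∑ d, Fm p h d yd / Em p h yd := by
            rw [Finset.mul_sum]
        _ = (Rm p yp yd * (Am p h yp / Bm p yp)) * ((∑ d, Fm p h d yd) / Em p h yd) := by
            rw [Finset.sum_div]
        _ = (Rm p yp yd * (Am p h yp / Bm p yp)) * (Em p h yd / Em p h yd) := by
            rw [hFE h yd]
        _ ≤ (Rm p yp yd * (Am p h yp / Bm p yp)) * 1 := by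
            refine mul_le_mul_of_nonneg_left (div_self_le_one' _) ?_
            exact mul_nonneg (hR0 yp yd) (div_nonneg (hA0 h yp) (hB0 yp))
        _ = Rm p yp yd * (Am p h yp / Bm p yp) := mul_one _
    have step_yd : ∀ h yp,
        (∑ yd, Rm p yp yd * (Am p h yp / Bm p yp)) ≤ Am p h yp := by
      intro h yp
      calc (∑ yd, Rm p yp yd * (Am p h yp / Bm p yp))
          = (∑ yd, Rm p yp yd) * (Am p h yp / Bm p yp) := by rw [Finset.sum_mul]
        _ = Bm p yp * (Am p h yp / Bm p yp) := by rw [hRB yp]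
        _ ≤ Am p h yp := mul_div_self_le' _ _ (hB0 yp) (hA0 h yp)
    calc (∑ h, ∑ yp, ∑ yd, ∑ d, ∑ xd,
        p h d xd yp yd * (Rm p yp yd / Qm p h d yp yd) * (Am p h yp / Bm p yp) *
          (Cm p h d xd yd / Em p h yd))
        ≤ ∑ h, ∑ yp, ∑ yd, ∑ d,
            Rm p yp yd * ((Am p h yp / Bm p yp) * (Fm p h d yd / Em p h yd)) := by
          refine Finset.sum_le_sum fun h _ => Finset.sum_le_sum fun yp _ =>
            Finset.sum_le_sum fun yd _ => Finset.sum_le_sum fun d _ => ?_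
          exact step_xd h yp yd d
      _ ≤ ∑ h, ∑ yp, ∑ yd, Rm p yp yd * (Am p h yp / Bm p yp) := by
          refine Finset.sum_le_sum fun h _ => Finset.sum_le_sum fun yp _ =>
            Finset.sum_le_sum fun yd _ => ?_
          exact step_d h yp yd
      _ ≤ ∑ h, ∑ yp, Am p h yp := by
          refine Finset.sum_le_sum fun h _ => Finset.sum_le_sum fun yp _ => ?_
          exact step_yd h yp
      _ = 1 := hA1
  -- rewrite the three entropies as sums over the full tuple
  have eQ : (∑ h, ∑ d, ∑ yp, ∑ yd, Qm p h d yp yd * Real.log (Qm p h d yp yd / Rm p yp yd)) =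
      ∑ h, ∑ d, ∑ xd, ∑ yp, ∑ yd,
        p h d xd yp yd * Real.log (Qm p h d yp yd / Rm p yp yd) := by
    have e1 : (∑ h, ∑ d, ∑ yp, ∑ yd, Qm p h d yp yd * Real.log (Qm p h d yp yd / Rm p yp yd)) =
        ∑ h, ∑ d, ∑ yp, ∑ yd, ∑ xd,
          p h d xd yp yd * Real.log (Qm p h d yp yd / Rm p yp yd) := by
      refine Finset.sum_congr rfl fun h _ => Finset.sum_congr rfl fun d _ =>
        Finset.sum_congr rfl fun yp _ => Finset.sum_congr rfl fun yd _ => ?_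
      show (∑ xd, p h d xd yp yd) * Real.log (Qm p h d yp yd / Rm p yp yd) = _
      rw [Finset.sum_mul]
    rw [e1]
    conv_lhs => enter [2, h, 2, d, 2, yp]; rw [Finset.sum_comm]
    conv_lhs => enter [2, h, 2, d]; rw [Finset.sum_comm]
  have eA : (∑ h, ∑ yp, Am p h yp * Real.log (Am p h yp / Bm p yp)) =
      ∑ h, ∑ d, ∑ xd, ∑ yp, ∑ yd,
        p h d xd yp yd * Real.log (Am p h yp / Bm p yp) := by
    have e1 : (∑ h, ∑ yp, Am p h yp * Real.log (Am p h yp / Bm p yp)) =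
        ∑ h, ∑ yp, ∑ d, ∑ xd, ∑ yd,
          p h d xd yp yd * Real.log (Am p h yp / Bm p yp) := by
      refine Finset.sum_congr rfl fun h _ => Finset.sum_congr rfl fun yp _ => ?_
      show (∑ d, ∑ xd, ∑ yd, p h d xd yp yd) * Real.log (Am p h yp / Bm p yp) = _
      simp only [Finset.sum_mul]
    rw [e1]
    conv_lhs => enter [2, h]; rw [Finset.sum_comm]
    conv_lhs => enter [2, h, 2, d]; rw [Finset.sum_comm]
  have eC : (∑ d, ∑ xd, ∑ yd, ∑ h, Cm p h d xd yd * Real.log (Cm p h d xd yd / Em p h yd)) =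
      ∑ h, ∑ d, ∑ xd, ∑ yp, ∑ yd,
        p h d xd yp yd * Real.log (Cm p h d xd yd / Em p h yd) := by
    have e1 : (∑ d, ∑ xd, ∑ yd, ∑ h, Cm p h d xd yd * Real.log (Cm p h d xd yd / Em p h yd)) =
        ∑ d, ∑ xd, ∑ yd, ∑ h, ∑ yp,
          p h d xd yp yd * Real.log (Cm p h d xd yd / Em p h yd) := by
      refine Finset.sum_congr rfl fun d _ => Finset.sum_congr rfl fun xd _ =>
        Finset.sum_congr rfl fun yd _ => Finset.sum_congr rfl fun h _ => ?_
      show (∑ yp, p h d xd yp yd) * Real.log (Cm p h d xd yd / Em p h yd) = _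
      rw [Finset.sum_mul]
    rw [e1]
    conv_lhs => enter [2, d, 2, xd]; rw [Finset.sum_comm]
    conv_lhs => enter [2, d]; rw [Finset.sum_comm]
    conv_lhs => rw [Finset.sum_comm]
    conv_lhs => enter [2, h, 2, d, 2, xd]; rw [Finset.sum_comm]
  -- main chain
  have key : (∑ h, ∑ yp, Am p h yp * Real.log (Am p h yp / Bm p yp)) +
      (∑ d, ∑ xd, ∑ yd, ∑ h, Cm p h d xd yd * Real.log (Cm p h d xd yd / Em p h yd)) ≤
      ∑ h, ∑ d, ∑ yp, ∑ yd, Qm p h d yp yd * Real.log (Qm p h d yp yd / Rm p yp yd) := by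
    rw [eA, eC, eQ]
    have comb : (∑ h, ∑ d, ∑ xd, ∑ yp, ∑ yd,
          p h d xd yp yd * Real.log (Am p h yp / Bm p yp)) +
        (∑ h, ∑ d, ∑ xd, ∑ yp, ∑ yd,
          p h d xd yp yd * Real.log (Cm p h d xd yd / Em p h yd)) =
        ∑ h, ∑ d, ∑ xd, ∑ yp, ∑ yd,
          (p h d xd yp yd * Real.log (Am p h yp / Bm p yp) +
           p h d xd yp yd * Real.log (Cm p h d xd yd / Em p h yd)) := by
      simp only [← Finset.sum_add_distrib]
    rw [comb]
    calc (∑ h, ∑ d, ∑ xd, ∑ yp, ∑ yd,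
          (p h d xd yp yd * Real.log (Am p h yp / Bm p yp) +
           p h d xd yp yd * Real.log (Cm p h d xd yd / Em p h yd)))
        ≤ ∑ h, ∑ d, ∑ xd, ∑ yp, ∑ yd,
          (p h d xd yp yd * Real.log (Qm p h d yp yd / Rm p yp yd) +
           (p h d xd yp yd * (Rm p yp yd / Qm p h d yp yd) * (Am p h yp / Bm p yp) *
              (Cm p h d xd yd / Em p h yd) - p h d xd yp yd)) := by
          refine Finset.sum_le_sum fun h _ => Finset.sum_le_sum fun d _ =>
            Finset.sum_le_sum fun xd _ => Finset.sum_le_sum fun yp _ =>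
            Finset.sum_le_sum fun yd _ => ?_
          have hg := log_pt (p h d xd yp yd) (Qm p h d yp yd) (Rm p yp yd) (Am p h yp)
            (Bm p yp) (Cm p h d xd yd) (Em p h yd) (hp h d xd yp yd)
            (hpQ h d xd yp yd) (hpR h d xd yp yd) (hpA h d xd yp yd)
            (hpB h d xd yp yd) (hpC h d xd yp yd) (hpE h d xd yp yd)
          linarith
      _ = (∑ h, ∑ d, ∑ xd, ∑ yp, ∑ yd,
            p h d xd yp yd * Real.log (Qm p h d yp yd / Rm p yp yd)) +
          ((∑ h, ∑ d, ∑ xd, ∑ yp, ∑ yd,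
            p h d xd yp yd * (Rm p yp yd / Qm p h d yp yd) * (Am p h yp / Bm p yp) *
              (Cm p h d xd yd / Em p h yd)) -
           (∑ h, ∑ d, ∑ xd, ∑ yp, ∑ yd, p h d xd yp yd)) := by
          simp only [Finset.sum_add_distrib, Finset.sum_sub_distrib]
      _ ≤ (∑ h, ∑ d, ∑ xd, ∑ yp, ∑ yd,
            p h d xd yp yd * Real.log (Qm p h d yp yd / Rm p yp yd)) + (1 - 1) := by
          rw [hs]
          exact add_le_add le_rfl (sub_le_sub_right hS 1)
      _ = ∑ h, ∑ d, ∑ xd, ∑ yp, ∑ yd,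
            p h d xd yp yd * Real.log (Qm p h d yp yd / Rm p yp yd) := by ring
  linarith

end Aux

theorem cond_entropy_pilot_chain
    {H D Xd Yp Yd : Type*} [Fintype H] [Fintype D] [Fintype Xd] [Fintype Yp] [Fintype Yd]
    (p : H → D → Xd → Yp → Yd → ℝ)
    (hp_nonneg : ∀ h d xd yp yd, 0 ≤ p h d xd yp yd)
    (hp_sum : ∑ h, ∑ d, ∑ xd, ∑ yp, ∑ yd, p h d xd yp yd = 1) :
    -(∑ h, ∑ d, ∑ yp, ∑ yd, (∑ xd, p h d xd yp yd) *
        Real.log ((∑ xd, p h d xd yp yd) /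
          (∑ h', ∑ d', ∑ xd', p h' d' xd' yp yd))) ≤
      -(∑ h, ∑ yp, (∑ d, ∑ xd, ∑ yd, p h d xd yp yd) *
          Real.log ((∑ d, ∑ xd, ∑ yd, p h d xd yp yd) /
            (∑ h', ∑ d', ∑ xd', ∑ yd', p h' d' xd' yp yd'))) +
      -(∑ d, ∑ xd, ∑ yd, ∑ h, (∑ yp, p h d xd yp yd) *
          Real.log ((∑ yp, p h d xd yp yd) /
            (∑ d', ∑ xd', ∑ yp', p h d' xd' yp' yd))) := by
  exact cond_aux p hp_nonneg hp_sum
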